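/- Smoothness of the value function (Lemma 1 of the paper): Assume the parametrized policy class satisfies, for all θ, θ₁, θ₂ ∈ ℝ^d and all (s,a): θ ↦ log π_θ(a|s) is twice continuously differentiable, ‖∇_θ log π_θ(a|s)‖₂ ≤ G, and ‖∇_θ log π_{θ₁}(a|s) − ∇_θ log π_{θ₂}(a|s)‖₂ ≤ M‖θ₁−θ₂‖₂. Let h : S×A → ℝ with |h(s,a)| ≤ 1 for all (s,a). Then θ ↦ J_h(π_θ) is differentiable with Lipschitz-continuous gradient: ‖∇_θ J_h(π_{θ₁}) − ∇_θ J_h(π_{θ₂})‖₂ ≤ L_J ‖θ₁ − θ₂‖₂ for all θ₁, θ₂, where L_J = M/(1−γ)² + 2G²/(1−γ)³. -/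

import Mathlib

open scoped BigOperators
open Matrix

noncomputable section

/-- State-transition matrix `P_π(s,s') = ∑_a π(a|s) P(s'|s,a)` induced by policy `π`. -/
def Pmat {S A : Type*} [Fintype A] (P : S → A → S → ℝ) (π : S → A → ℝ) : Matrix S S ℝ :=
  Matrix.of fun s s' => ∑ a, π s a * P s a s'

/-- Discounted state-action occupancy measure
`d_ρ^π(s,a) = (1-γ) ∑ₜ γ^t (ρᵀ P_π^t)(s) π(a|s)`. -/
def occupancy {S A : Type*} [Fintype S] [DecidableEq S] [Fintype A]
    (P : S → A → S → ℝ) (γ : ℝ) (ρ : S → ℝ) (π : S → A → ℝ) (s : S) (a : A) : ℝ :=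
  (1 - γ) * (∑' t : ℕ, γ ^ t * Matrix.vecMul ρ (Pmat P π ^ t) s) * π s a

/-- Value vector `V_h^π = ∑ₜ γ^t P_π^t h_π` where `h_π(s) = ∑_a π(a|s) h(s,a)`. -/
def Vvec {S A : Type*} [Fintype S] [DecidableEq S] [Fintype A]
    (P : S → A → S → ℝ) (γ : ℝ) (h : S → A → ℝ) (π : S → A → ℝ) : S → ℝ :=
  ∑' t : ℕ, γ ^ t • (Pmat P π ^ t).mulVec (fun s => ∑ a, π s a * h s a)

/-- Scalar value `J_h(π) = ∑_s ρ(s) V_h^π(s)`. -/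
def Jval {S A : Type*} [Fintype S] [DecidableEq S] [Fintype A]
    (P : S → A → S → ℝ) (γ : ℝ) (ρ : S → ℝ) (h : S → A → ℝ) (π : S → A → ℝ) : ℝ :=
  ∑ s, ρ s * Vvec P γ h π s

/-- Gradient of the log-policy (score function) at parameter `θ`. -/
def gradLog {S A : Type*} {d : ℕ} (pc : EuclideanSpace ℝ (Fin d) → S → A → ℝ)
    (θ : EuclideanSpace ℝ (Fin d)) (s : S) (a : A) : EuclideanSpace ℝ (Fin d) :=
  gradient (fun θ' => Real.log (pc θ' s a)) θ

set_option maxHeartbeats 1000000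
set_option synthInstance.maxHeartbeats 400000
set_option linter.unusedSectionVars false

namespace Stmt10Aux

variable {S A : Type*} {d : ℕ}

instance bsm1 : NormSMulClass ℝ (EuclideanSpace ℝ (Fin d) →L[ℝ] ℝ) :=
  NormedSpace.toNormSMulClass (𝕜 := ℝ) (E := EuclideanSpace ℝ (Fin d) →L[ℝ] ℝ)
instance bsm2 : NormSMulClass ℝ (EuclideanSpace ℝ (Fin d) →L[ℝ] (EuclideanSpace ℝ (Fin d) →L[ℝ] ℝ)) :=
  NormedSpace.toNormSMulClass (𝕜 := ℝ) (E := EuclideanSpace ℝ (Fin d) →L[ℝ] (EuclideanSpace ℝ (Fin d) →L[ℝ] ℝ))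

/-- score function as a continuous linear functional -/
def gg (pc : EuclideanSpace ℝ (Fin d) → S → A → ℝ) (s : S) (a : A)
    (θ : EuclideanSpace ℝ (Fin d)) : EuclideanSpace ℝ (Fin d) →L[ℝ] ℝ :=
  fderiv ℝ (fun θ' => Real.log (pc θ' s a)) θ

def Hg (pc : EuclideanSpace ℝ (Fin d) → S → A → ℝ) (s : S) (a : A)
    (θ : EuclideanSpace ℝ (Fin d)) : EuclideanSpace ℝ (Fin d) →L[ℝ] (EuclideanSpace ℝ (Fin d) →L[ℝ] ℝ) :=
  fderiv ℝ (gg pc s a) θ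

variable {pc : EuclideanSpace ℝ (Fin d) → S → A → ℝ}

lemma gradLog_eq (θ : EuclideanSpace ℝ (Fin d)) (s : S) (a : A) :
    gradLog pc θ s a = (InnerProductSpace.toDual ℝ (EuclideanSpace ℝ (Fin d))).symm (gg pc s a θ) := rfl

lemma norm_gg (θ : EuclideanSpace ℝ (Fin d)) (s : S) (a : A) :
    ‖gg pc s a θ‖ = ‖gradLog pc θ s a‖ := by
  rw [gradLog_eq, LinearIsometryEquiv.norm_map]

lemma norm_gg_sub (θ₁ θ₂ : EuclideanSpace ℝ (Fin d)) (s : S) (a : A) :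
    ‖gg pc s a θ₁ - gg pc s a θ₂‖ = ‖gradLog pc θ₁ s a - gradLog pc θ₂ s a‖ := by
  rw [gradLog_eq, gradLog_eq, ← map_sub, LinearIsometryEquiv.norm_map]

lemma hasFDerivAt_gg (hC2 : ∀ s a, ContDiff ℝ 2 fun θ => Real.log (pc θ s a))
    (s : S) (a : A) (θ : EuclideanSpace ℝ (Fin d)) :
    HasFDerivAt (gg pc s a) (Hg pc s a θ) θ :=
  (((hC2 s a).fderiv_right (m := 1) (by norm_num)).differentiable one_ne_zero θ).hasFDerivAt

lemma norm_Hg_le {M : ℝ} (hM0 : 0 ≤ M)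
    (hC2 : ∀ s a, ContDiff ℝ 2 fun θ => Real.log (pc θ s a))
    (hM : ∀ θ₁ θ₂ s a, ‖gradLog pc θ₁ s a - gradLog pc θ₂ s a‖ ≤ M * ‖θ₁ - θ₂‖)
    (s : S) (a : A) (θ : EuclideanSpace ℝ (Fin d)) : ‖Hg pc s a θ‖ ≤ M := by
  refine (hasFDerivAt_gg hC2 s a θ).le_of_lip' hM0 ?_
  filter_upwards with θ' using by rw [norm_gg_sub]; exact hM θ' θ s a

lemma hasFDerivAt_pc (hpos : ∀ θ s a, 0 < pc θ s a)
    (hC2 : ∀ s a, ContDiff ℝ 2 fun θ => Real.log (pc θ s a))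
    (s : S) (a : A) (θ : EuclideanSpace ℝ (Fin d)) :
    HasFDerivAt (fun θ' => pc θ' s a) (pc θ s a • gg pc s a θ) θ := by
  have hl : HasFDerivAt (fun θ' => Real.log (pc θ' s a)) (gg pc s a θ) θ :=
    (((hC2 s a).differentiable (by norm_num)) θ).hasFDerivAt
  have := (Real.hasDerivAt_exp (Real.log (pc θ s a))).comp_hasFDerivAt θ hl
  have he : ∀ θ' : EuclideanSpace ℝ (Fin d), Real.exp (Real.log (pc θ' s a)) = pc θ' s a :=
    fun θ' => Real.exp_log (hpos θ' s a)
  simpa [Function.comp_def, he] using this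

/-- second derivative of the policy -/
def D2pc (pc : EuclideanSpace ℝ (Fin d) → S → A → ℝ) (s : S) (a : A)
    (θ : EuclideanSpace ℝ (Fin d)) : EuclideanSpace ℝ (Fin d) →L[ℝ] (EuclideanSpace ℝ (Fin d) →L[ℝ] ℝ) :=
  pc θ s a • Hg pc s a θ + (pc θ s a • gg pc s a θ).smulRight (gg pc s a θ)

lemma hasFDerivAt_pc_smul_gg (hpos : ∀ θ s a, 0 < pc θ s a)
    (hC2 : ∀ s a, ContDiff ℝ 2 fun θ => Real.log (pc θ s a))
    (s : S) (a : A) (θ : EuclideanSpace ℝ (Fin d)) :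
    HasFDerivAt (fun θ' => pc θ' s a • gg pc s a θ') (D2pc pc s a θ) θ :=
  (hasFDerivAt_pc hpos hC2 s a θ).smul (hasFDerivAt_gg hC2 s a θ)

lemma norm_pc_smul_gg_le {G : ℝ} (hpos : ∀ θ s a, 0 < pc θ s a)
    (hG : ∀ θ s a, ‖gradLog pc θ s a‖ ≤ G)
    (s : S) (a : A) (θ : EuclideanSpace ℝ (Fin d)) :
    ‖pc θ s a • gg pc s a θ‖ ≤ pc θ s a * G := by
  rw [norm_smul (pc θ s a) (gg pc s a θ), Real.norm_eq_abs, abs_of_pos (hpos θ s a), norm_gg]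
  exact mul_le_mul_of_nonneg_left (hG θ s a) (hpos θ s a).le

lemma norm_D2pc_le {G M : ℝ} (hpos : ∀ θ s a, 0 < pc θ s a)
    (hC2 : ∀ s a, ContDiff ℝ 2 fun θ => Real.log (pc θ s a))
    (hG : ∀ θ s a, ‖gradLog pc θ s a‖ ≤ G)
    (hM0 : 0 ≤ M)
    (hM : ∀ θ₁ θ₂ s a, ‖gradLog pc θ₁ s a - gradLog pc θ₂ s a‖ ≤ M * ‖θ₁ - θ₂‖)
    (s : S) (a : A) (θ : EuclideanSpace ℝ (Fin d)) :
    ‖D2pc pc s a θ‖ ≤ pc θ s a * (M + G ^ 2) := by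
  have hG0 : (0:ℝ) ≤ G := le_trans (norm_nonneg _) (hG θ s a)
  have h1 : ‖pc θ s a • Hg pc s a θ‖ ≤ pc θ s a * M := by
    rw [norm_smul (pc θ s a) (Hg pc s a θ), Real.norm_eq_abs, abs_of_pos (hpos θ s a)]
    exact mul_le_mul_of_nonneg_left (norm_Hg_le hM0 hC2 hM s a θ) (hpos θ s a).le
  have h2 : ‖(pc θ s a • gg pc s a θ).smulRight (gg pc s a θ)‖ ≤ pc θ s a * G ^ 2 := by
    rw [ContinuousLinearMap.norm_smulRight_apply]
    calc ‖pc θ s a • gg pc s a θ‖ * ‖gg pc s a θ‖ ≤ (pc θ s a * G) * G := by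
          apply mul_le_mul (norm_pc_smul_gg_le hpos hG s a θ) _ (norm_nonneg _)
            (mul_nonneg (hpos θ s a).le hG0)
          rw [norm_gg]; exact hG θ s a
      _ = pc θ s a * G ^ 2 := by ring
  unfold D2pc
  exact le_trans (norm_add_le (pc θ s a • Hg pc s a θ) ((pc θ s a • gg pc s a θ).smulRight (gg pc s a θ))) (le_trans (add_le_add h1 h2) (le_of_eq (by ring)))

end Stmt10Aux

section Part2

variable {S A : Type*} [Fintype S] [DecidableEq S] [Fintype A] {d : ℕ}
variable {pc : EuclideanSpace ℝ (Fin d) → S → A → ℝ}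

open Finset

namespace Stmt10Aux

/-- first derivative of the transition row -/
def dP (P : S → A → S → ℝ) (pc : EuclideanSpace ℝ (Fin d) → S → A → ℝ) (s s' : S)
    (θ : EuclideanSpace ℝ (Fin d)) : EuclideanSpace ℝ (Fin d) →L[ℝ] ℝ :=
  ∑ a, P s a s' • (pc θ s a • gg pc s a θ)

/-- second derivative of the transition row -/
def HP (P : S → A → S → ℝ) (pc : EuclideanSpace ℝ (Fin d) → S → A → ℝ) (s s' : S)
    (θ : EuclideanSpace ℝ (Fin d)) :
    EuclideanSpace ℝ (Fin d) →L[ℝ] (EuclideanSpace ℝ (Fin d) →L[ℝ] ℝ) :=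
  ∑ a, P s a s' • D2pc pc s a θ

lemma hasFDerivAt_Pp (P : S → A → S → ℝ)
    (hpos : ∀ θ s a, 0 < pc θ s a)
    (hC2 : ∀ s a, ContDiff ℝ 2 fun θ => Real.log (pc θ s a))
    (s s' : S) (θ : EuclideanSpace ℝ (Fin d)) :
    HasFDerivAt (fun θ' => ∑ a, pc θ' s a * P s a s') (dP P pc s s' θ) θ :=
  HasFDerivAt.fun_sum fun a _ => (hasFDerivAt_pc hpos hC2 s a θ).mul_const (P s a s')

lemma hasFDerivAt_dP (P : S → A → S → ℝ)
    (hpos : ∀ θ s a, 0 < pc θ s a)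
    (hC2 : ∀ s a, ContDiff ℝ 2 fun θ => Real.log (pc θ s a))
    (s s' : S) (θ : EuclideanSpace ℝ (Fin d)) :
    HasFDerivAt (fun θ' => dP P pc s s' θ') (HP P pc s s' θ) θ :=
  HasFDerivAt.fun_sum fun a _ => (hasFDerivAt_pc_smul_gg hpos hC2 s a θ).const_smul (P s a s')

/-- generic bound: `∑_{s'} ‖∑_a P(s'|s,a) • v a‖ ≤ C` when `‖v a‖ ≤ π(a|s) C`. -/
lemma sum_norm_sum_smul_le {X : Type*} [NormedAddCommGroup X] [NormedSpace ℝ X]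
    (P : S → A → S → ℝ) (hP0 : ∀ s a s', 0 ≤ P s a s') (hP1 : ∀ s a, ∑ s', P s a s' = 1)
    (s : S) (w : A → ℝ) (hw1 : ∑ a, w a = 1)
    (v : A → X) (C : ℝ) (hv : ∀ a, ‖v a‖ ≤ w a * C) :
    ∑ s', ‖∑ a, P s a s' • v a‖ ≤ C := by
  calc ∑ s', ‖∑ a, P s a s' • v a‖ ≤ ∑ s', ∑ a, P s a s' * (w a * C) :=
        Finset.sum_le_sum fun s' _ => (norm_sum_le _ _).trans (Finset.sum_le_sum fun a _ => by
          rw [norm_smul, Real.norm_eq_abs, abs_of_nonneg (hP0 s a s')]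
          exact mul_le_mul_of_nonneg_left (hv a) (hP0 s a s'))
    _ = ∑ a, (∑ s', P s a s') * (w a * C) := by
          rw [Finset.sum_comm]
          exact Finset.sum_congr rfl fun a _ => (Finset.sum_mul _ _ _).symm
    _ = C := by
          simp only [hP1 s, one_mul]
          rw [← Finset.sum_mul, hw1, one_mul]

lemma sum_norm_dP_le (P : S → A → S → ℝ)
    (hP0 : ∀ s a s', 0 ≤ P s a s') (hP1 : ∀ s a, ∑ s', P s a s' = 1)
    (hpos : ∀ θ s a, 0 < pc θ s a) (hnorm : ∀ θ s, ∑ a, pc θ s a = 1)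
    {G : ℝ} (hG : ∀ θ s a, ‖gradLog pc θ s a‖ ≤ G)
    (s : S) (θ : EuclideanSpace ℝ (Fin d)) :
    ∑ s', ‖dP P pc s s' θ‖ ≤ G := by
  unfold dP
  exact sum_norm_sum_smul_le P hP0 hP1 s (fun a => pc θ s a) (hnorm θ s)
    (fun a => pc θ s a • gg pc s a θ) G (fun a => norm_pc_smul_gg_le hpos hG s a θ)

lemma sum_norm_HP_le (P : S → A → S → ℝ)
    (hP0 : ∀ s a s', 0 ≤ P s a s') (hP1 : ∀ s a, ∑ s', P s a s' = 1)
    (hpos : ∀ θ s a, 0 < pc θ s a) (hnorm : ∀ θ s, ∑ a, pc θ s a = 1)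
    (hC2 : ∀ s a, ContDiff ℝ 2 fun θ => Real.log (pc θ s a))
    {G M : ℝ} (hG : ∀ θ s a, ‖gradLog pc θ s a‖ ≤ G) (hM0 : 0 ≤ M)
    (hM : ∀ θ₁ θ₂ s a, ‖gradLog pc θ₁ s a - gradLog pc θ₂ s a‖ ≤ M * ‖θ₁ - θ₂‖)
    (s : S) (θ : EuclideanSpace ℝ (Fin d)) :
    ∑ s', ‖HP P pc s s' θ‖ ≤ M + G ^ 2 := by
  unfold HP
  exact sum_norm_sum_smul_le P hP0 hP1 s (fun a => pc θ s a) (hnorm θ s)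
    (fun a => D2pc pc s a θ) (M + G ^ 2)
    (fun a => (norm_D2pc_le hpos hC2 hG hM0 hM s a θ).trans (le_of_eq (by ring)))

/-- the distribution of the state at time `t` -/
def uu (P : S → A → S → ℝ) (ρ : S → ℝ) (pc : EuclideanSpace ℝ (Fin d) → S → A → ℝ)
    (t : ℕ) (θ : EuclideanSpace ℝ (Fin d)) (s : S) : ℝ :=
  Matrix.vecMul ρ (Pmat P (pc θ) ^ t) s

lemma uu_zero (P : S → A → S → ℝ) (ρ : S → ℝ) (θ : EuclideanSpace ℝ (Fin d)) (s : S) :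
    uu P ρ pc 0 θ s = ρ s := by
  simp [uu]

lemma uu_succ (P : S → A → S → ℝ) (ρ : S → ℝ) (t : ℕ) (θ : EuclideanSpace ℝ (Fin d)) (s' : S) :
    uu P ρ pc (t + 1) θ s' = ∑ s, uu P ρ pc t θ s * ∑ a, pc θ s a * P s a s' := by
  rw [uu, pow_succ, ← Matrix.vecMul_vecMul]
  rfl

end Stmt10Aux

end Part2

section Part3

variable {S A : Type*} [Fintype S] [DecidableEq S] [Fintype A] {d : ℕ}
variable {pc : EuclideanSpace ℝ (Fin d) → S → A → ℝ}

namespace Stmt10Aux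

lemma Pp_nonneg (P : S → A → S → ℝ) (hP0 : ∀ s a s', 0 ≤ P s a s')
    (hpos : ∀ θ s a, 0 < pc θ s a) (θ : EuclideanSpace ℝ (Fin d)) (s s' : S) :
    0 ≤ ∑ a, pc θ s a * P s a s' :=
  Finset.sum_nonneg fun a _ => mul_nonneg (hpos θ s a).le (hP0 s a s')

lemma Pp_rowsum (P : S → A → S → ℝ) (hP1 : ∀ s a, ∑ s', P s a s' = 1)
    (hnorm : ∀ θ s, ∑ a, pc θ s a = 1) (θ : EuclideanSpace ℝ (Fin d)) (s : S) :
    ∑ s', ∑ a, pc θ s a * P s a s' = 1 := by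
  rw [Finset.sum_comm]
  calc ∑ a, ∑ s', pc θ s a * P s a s' = ∑ a, pc θ s a * ∑ s', P s a s' := by
        exact Finset.sum_congr rfl fun a _ => (Finset.mul_sum _ _ _).symm
    _ = 1 := by simp only [hP1, mul_one]; exact hnorm θ s

lemma key (P : S → A → S → ℝ) (hP0 : ∀ s a s', 0 ≤ P s a s')
    (hP1 : ∀ s a, ∑ s', P s a s' = 1)
    (ρ : S → ℝ) (hρ0 : ∀ s, 0 ≤ ρ s) (hρ1 : ∑ s, ρ s = 1)
    (hpos : ∀ θ s a, 0 < pc θ s a) (hnorm : ∀ θ s, ∑ a, pc θ s a = 1)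
    (hC2 : ∀ s a, ContDiff ℝ 2 fun θ => Real.log (pc θ s a))
    {G : ℝ} (hG0 : 0 ≤ G) (hG : ∀ θ s a, ‖gradLog pc θ s a‖ ≤ G)
    {M : ℝ} (hM0 : 0 ≤ M)
    (hM : ∀ θ₁ θ₂ s a, ‖gradLog pc θ₁ s a - gradLog pc θ₂ s a‖ ≤ M * ‖θ₁ - θ₂‖)
    (t : ℕ) :
    ∃ (w : EuclideanSpace ℝ (Fin d) → S → (EuclideanSpace ℝ (Fin d) →L[ℝ] ℝ))
      (Hw : EuclideanSpace ℝ (Fin d) → S →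
        (EuclideanSpace ℝ (Fin d) →L[ℝ] (EuclideanSpace ℝ (Fin d) →L[ℝ] ℝ))),
      (∀ θ s, 0 ≤ uu P ρ pc t θ s) ∧ (∀ θ, ∑ s, uu P ρ pc t θ s = 1) ∧
      (∀ θ s, HasFDerivAt (fun θ' => uu P ρ pc t θ' s) (w θ s) θ) ∧
      (∀ θ s, HasFDerivAt (fun θ' => w θ' s) (Hw θ s) θ) ∧
      (∀ θ, ∑ s, ‖w θ s‖ ≤ t * G) ∧
      (∀ θ, ∑ s, ‖Hw θ s‖ ≤ t * M + t ^ 2 * G ^ 2) := by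
  induction t with
  | zero =>
    refine ⟨fun _ _ => 0, fun _ _ => 0, ?_, ?_, ?_, ?_, ?_, ?_⟩
    · intro θ s; rw [uu_zero]; exact hρ0 s
    · intro θ; simp only [uu_zero]; exact hρ1
    · intro θ s
      have : (fun θ' => uu P ρ pc 0 θ' s) = fun _ => ρ s := funext fun θ' => uu_zero P ρ θ' s
      rw [this]; exact hasFDerivAt_const _ _
    · intro θ s; exact hasFDerivAt_const _ _
    · intro θ
      have hz : ‖(0 : EuclideanSpace ℝ (Fin d) →L[ℝ] ℝ)‖ = 0 :=
        norm_zero (E := EuclideanSpace ℝ (Fin d) →L[ℝ] ℝ)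
      simp [hz]
    · intro θ
      have hz : ‖(0 : EuclideanSpace ℝ (Fin d) →L[ℝ] (EuclideanSpace ℝ (Fin d) →L[ℝ] ℝ))‖ = 0 :=
        norm_zero (E := EuclideanSpace ℝ (Fin d) →L[ℝ] (EuclideanSpace ℝ (Fin d) →L[ℝ] ℝ))
      simp [hz]
  | succ t ih =>
    obtain ⟨w, Hw, h0, h1, hw, hHw, hwn, hHwn⟩ := ih
    refine ⟨fun θ s' => ∑ s, (uu P ρ pc t θ s • dP P pc s s' θ +
        (∑ a, pc θ s a * P s a s') • w θ s),
      fun θ s' => ∑ s, ((uu P ρ pc t θ s • HP P pc s s' θ +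
        (w θ s).smulRight (dP P pc s s' θ)) +
        ((∑ a, pc θ s a * P s a s') • Hw θ s + (dP P pc s s' θ).smulRight (w θ s))),
      ?_, ?_, ?_, ?_, ?_, ?_⟩
    · intro θ s'
      rw [uu_succ]
      exact Finset.sum_nonneg fun s _ => mul_nonneg (h0 θ s) (Pp_nonneg P hP0 hpos θ s s')
    · intro θ
      simp only [uu_succ]
      rw [Finset.sum_comm]
      calc ∑ s, ∑ s', uu P ρ pc t θ s * ∑ a, pc θ s a * P s a s'
          = ∑ s, uu P ρ pc t θ s * ∑ s', ∑ a, pc θ s a * P s a s' :=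
            Finset.sum_congr rfl fun s _ => (Finset.mul_sum _ _ _).symm
        _ = 1 := by
            calc ∑ s, uu P ρ pc t θ s * ∑ s', ∑ a, pc θ s a * P s a s'
                = ∑ s, uu P ρ pc t θ s := Finset.sum_congr rfl fun s _ => by
                  rw [Pp_rowsum P hP1 hnorm θ s, mul_one]
              _ = 1 := h1 θ
    · intro θ s'
      have heq : (fun θ' => uu P ρ pc (t+1) θ' s')
          = fun θ' => ∑ s, uu P ρ pc t θ' s * ∑ a, pc θ' s a * P s a s' :=
        funext fun θ' => uu_succ P ρ t θ' s'
      rw [heq]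
      exact HasFDerivAt.fun_sum fun s _ => (hw θ s).mul (hasFDerivAt_Pp P hpos hC2 s s' θ)
    · intro θ s'
      exact HasFDerivAt.fun_sum fun s _ =>
        ((hw θ s).smul (hasFDerivAt_dP P hpos hC2 s s' θ)).add
          ((hasFDerivAt_Pp P hpos hC2 s s' θ).smul (hHw θ s))
    · intro θ
      have step1 : ∀ s', ‖∑ s, (uu P ρ pc t θ s • dP P pc s s' θ +
          (∑ a, pc θ s a * P s a s') • w θ s)‖ ≤
          ∑ s, (uu P ρ pc t θ s * ‖dP P pc s s' θ‖ +
            (∑ a, pc θ s a * P s a s') * ‖w θ s‖) := by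
        intro s'
        refine (norm_sum_le _ _).trans (Finset.sum_le_sum fun s _ => ?_)
        refine (norm_add_le _ _).trans (add_le_add ?_ ?_)
        · rw [norm_smul (uu P ρ pc t θ s) (dP P pc s s' θ), Real.norm_eq_abs,
            abs_of_nonneg (h0 θ s)]
        · rw [norm_smul (∑ a, pc θ s a * P s a s') (w θ s), Real.norm_eq_abs,
            abs_of_nonneg (Pp_nonneg P hP0 hpos θ s s')]
      calc ∑ s', ‖∑ s, (uu P ρ pc t θ s • dP P pc s s' θ +
              (∑ a, pc θ s a * P s a s') • w θ s)‖
          ≤ ∑ s', ∑ s, (uu P ρ pc t θ s * ‖dP P pc s s' θ‖ +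
              (∑ a, pc θ s a * P s a s') * ‖w θ s‖) :=
            Finset.sum_le_sum fun s' _ => step1 s'
        _ = ∑ s, (uu P ρ pc t θ s * ∑ s', ‖dP P pc s s' θ‖ +
              (∑ s', ∑ a, pc θ s a * P s a s') * ‖w θ s‖) := by
            rw [Finset.sum_comm]
            refine Finset.sum_congr rfl fun s _ => ?_
            rw [Finset.sum_add_distrib, Finset.mul_sum, Finset.sum_mul]
        _ ≤ ∑ s, (uu P ρ pc t θ s * G + 1 * ‖w θ s‖) := by
            refine Finset.sum_le_sum fun s _ => add_le_add ?_ ?_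
            · exact mul_le_mul_of_nonneg_left
                (sum_norm_dP_le P hP0 hP1 hpos hnorm hG s θ) (h0 θ s)
            · rw [Pp_rowsum P hP1 hnorm θ s]
        _ = (∑ s, uu P ρ pc t θ s) * G + ∑ s, ‖w θ s‖ := by
            rw [Finset.sum_add_distrib, ← Finset.sum_mul]
            simp [one_mul]
        _ ≤ 1 * G + t * G := by
            rw [h1 θ]
            exact add_le_add_right (hwn θ) _
        _ = (t + 1 : ℕ) * G := by push_cast; ring
    · intro θ
      have step1 : ∀ s', ‖∑ s, ((uu P ρ pc t θ s • HP P pc s s' θ +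
          (w θ s).smulRight (dP P pc s s' θ)) +
          ((∑ a, pc θ s a * P s a s') • Hw θ s + (dP P pc s s' θ).smulRight (w θ s)))‖ ≤
          ∑ s, ((uu P ρ pc t θ s * ‖HP P pc s s' θ‖ + ‖w θ s‖ * ‖dP P pc s s' θ‖) +
            ((∑ a, pc θ s a * P s a s') * ‖Hw θ s‖ + ‖dP P pc s s' θ‖ * ‖w θ s‖)) := by
        intro s'
        refine le_trans
          (norm_sum_le (E := EuclideanSpace ℝ (Fin d) →L[ℝ] (EuclideanSpace ℝ (Fin d) →L[ℝ] ℝ))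
            Finset.univ _) (Finset.sum_le_sum fun s _ => ?_)
        refine le_trans
          (norm_add_le (E := EuclideanSpace ℝ (Fin d) →L[ℝ] (EuclideanSpace ℝ (Fin d) →L[ℝ] ℝ)) _ _)
          (add_le_add ?_ ?_)
        · refine le_trans
            (norm_add_le (E := EuclideanSpace ℝ (Fin d) →L[ℝ] (EuclideanSpace ℝ (Fin d) →L[ℝ] ℝ)) _ _)
            (add_le_add ?_ ?_)
          · rw [norm_smul (uu P ρ pc t θ s) (HP P pc s s' θ), Real.norm_eq_abs,
              abs_of_nonneg (h0 θ s)]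
          · rw [ContinuousLinearMap.norm_smulRight_apply]
        · refine le_trans
            (norm_add_le (E := EuclideanSpace ℝ (Fin d) →L[ℝ] (EuclideanSpace ℝ (Fin d) →L[ℝ] ℝ)) _ _)
            (add_le_add ?_ ?_)
          · rw [norm_smul (∑ a, pc θ s a * P s a s') (Hw θ s), Real.norm_eq_abs,
              abs_of_nonneg (Pp_nonneg P hP0 hpos θ s s')]
          · rw [ContinuousLinearMap.norm_smulRight_apply]
      calc ∑ s', ‖∑ s, ((uu P ρ pc t θ s • HP P pc s s' θ +
              (w θ s).smulRight (dP P pc s s' θ)) +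
              ((∑ a, pc θ s a * P s a s') • Hw θ s + (dP P pc s s' θ).smulRight (w θ s)))‖
          ≤ ∑ s', ∑ s, ((uu P ρ pc t θ s * ‖HP P pc s s' θ‖ + ‖w θ s‖ * ‖dP P pc s s' θ‖) +
              ((∑ a, pc θ s a * P s a s') * ‖Hw θ s‖ + ‖dP P pc s s' θ‖ * ‖w θ s‖)) :=
            Finset.sum_le_sum fun s' _ => step1 s'
        _ = ∑ s, ((uu P ρ pc t θ s * ∑ s', ‖HP P pc s s' θ‖ +
              ‖w θ s‖ * ∑ s', ‖dP P pc s s' θ‖) +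
              ((∑ s', ∑ a, pc θ s a * P s a s') * ‖Hw θ s‖ +
              (∑ s', ‖dP P pc s s' θ‖) * ‖w θ s‖)) := by
            rw [Finset.sum_comm]
            refine Finset.sum_congr rfl fun s _ => ?_
            rw [Finset.sum_add_distrib, Finset.sum_add_distrib, Finset.sum_add_distrib,
              Finset.mul_sum, Finset.mul_sum, Finset.sum_mul, Finset.sum_mul]
        _ ≤ ∑ s, ((uu P ρ pc t θ s * (M + G ^ 2) + ‖w θ s‖ * G) +
              (1 * ‖Hw θ s‖ + G * ‖w θ s‖)) := by
            refine Finset.sum_le_sum fun s _ => add_le_add (add_le_add ?_ ?_) (add_le_add ?_ ?_)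
            · exact mul_le_mul_of_nonneg_left
                (sum_norm_HP_le P hP0 hP1 hpos hnorm hC2 hG hM0 hM s θ) (h0 θ s)
            · exact mul_le_mul_of_nonneg_left
                (sum_norm_dP_le P hP0 hP1 hpos hnorm hG s θ) (norm_nonneg _)
            · rw [Pp_rowsum P hP1 hnorm θ s]
            · exact mul_le_mul_of_nonneg_right
                (sum_norm_dP_le P hP0 hP1 hpos hnorm hG s θ) (norm_nonneg _)
        _ = (∑ s, uu P ρ pc t θ s) * (M + G ^ 2) + (∑ s, ‖w θ s‖) * G +
              (∑ s, ‖Hw θ s‖) + G * ∑ s, ‖w θ s‖ := by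
            simp only [Finset.sum_add_distrib, ← Finset.sum_mul, ← Finset.mul_sum, one_mul]
            ring
        _ ≤ 1 * (M + G ^ 2) + (t * G) * G + (t * M + t ^ 2 * G ^ 2) + G * (t * G) := by
            rw [h1 θ]
            have h2 := hwn θ
            have h3 := hHwn θ
            have hged : (0:ℝ) ≤ G := hG0
            gcongr
        _ = (t + 1 : ℕ) * M + ((t + 1 : ℕ)) ^ 2 * G ^ 2 := by push_cast; ring

end Stmt10Aux

end Part3

section Part4

variable {S A : Type*} [Fintype S] [DecidableEq S] [Fintype A] {d : ℕ}
variable {pc : EuclideanSpace ℝ (Fin d) → S → A → ℝ}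

namespace Stmt10Aux

/-- averaged reward -/
def hpi (pc : EuclideanSpace ℝ (Fin d) → S → A → ℝ) (h : S → A → ℝ)
    (θ : EuclideanSpace ℝ (Fin d)) (s : S) : ℝ :=
  ∑ a, pc θ s a * h s a

/-- the `t`-th term of the value series -/
def Jt (P : S → A → S → ℝ) (ρ : S → ℝ) (pc : EuclideanSpace ℝ (Fin d) → S → A → ℝ)
    (h : S → A → ℝ) (t : ℕ) (θ : EuclideanSpace ℝ (Fin d)) : ℝ :=
  ∑ s, uu P ρ pc t θ s * hpi pc h θ s

def dh (pc : EuclideanSpace ℝ (Fin d) → S → A → ℝ) (h : S → A → ℝ)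
    (θ : EuclideanSpace ℝ (Fin d)) (s : S) : EuclideanSpace ℝ (Fin d) →L[ℝ] ℝ :=
  ∑ a, h s a • (pc θ s a • gg pc s a θ)

def Hh (pc : EuclideanSpace ℝ (Fin d) → S → A → ℝ) (h : S → A → ℝ)
    (θ : EuclideanSpace ℝ (Fin d)) (s : S) :
    EuclideanSpace ℝ (Fin d) →L[ℝ] (EuclideanSpace ℝ (Fin d) →L[ℝ] ℝ) :=
  ∑ a, h s a • D2pc pc s a θ

variable {h : S → A → ℝ}

lemma abs_hpi_le (hpos : ∀ θ s a, 0 < pc θ s a) (hnorm : ∀ θ s, ∑ a, pc θ s a = 1)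
    (hh : ∀ s a, |h s a| ≤ 1) (θ : EuclideanSpace ℝ (Fin d)) (s : S) :
    |hpi pc h θ s| ≤ 1 := by
  calc |hpi pc h θ s| ≤ ∑ a, |pc θ s a * h s a| := Finset.abs_sum_le_sum_abs _ _
    _ ≤ ∑ a, pc θ s a := Finset.sum_le_sum fun a _ => by
        rw [abs_mul, abs_of_pos (hpos θ s a)]
        exact mul_le_of_le_one_right (hpos θ s a).le (hh s a)
    _ = 1 := hnorm θ s

lemma hasFDerivAt_hpi (hpos : ∀ θ s a, 0 < pc θ s a)
    (hC2 : ∀ s a, ContDiff ℝ 2 fun θ => Real.log (pc θ s a))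
    (θ : EuclideanSpace ℝ (Fin d)) (s : S) :
    HasFDerivAt (fun θ' => hpi pc h θ' s) (dh pc h θ s) θ :=
  HasFDerivAt.fun_sum fun a _ => (hasFDerivAt_pc hpos hC2 s a θ).mul_const (h s a)

lemma hasFDerivAt_dh (hpos : ∀ θ s a, 0 < pc θ s a)
    (hC2 : ∀ s a, ContDiff ℝ 2 fun θ => Real.log (pc θ s a))
    (θ : EuclideanSpace ℝ (Fin d)) (s : S) :
    HasFDerivAt (fun θ' => dh pc h θ' s) (Hh pc h θ s) θ :=
  HasFDerivAt.fun_sum fun a _ => (hasFDerivAt_pc_smul_gg hpos hC2 s a θ).const_smul (h s a)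

lemma norm_dh_le {G : ℝ} (hpos : ∀ θ s a, 0 < pc θ s a) (hnorm : ∀ θ s, ∑ a, pc θ s a = 1)
    (hG : ∀ θ s a, ‖gradLog pc θ s a‖ ≤ G) (hh : ∀ s a, |h s a| ≤ 1)
    (θ : EuclideanSpace ℝ (Fin d)) (s : S) : ‖dh pc h θ s‖ ≤ G := by
  refine le_trans (norm_sum_le _ _) ?_
  have hb : ∀ a, ‖h s a • (pc θ s a • gg pc s a θ)‖ ≤ pc θ s a * G := fun a => by
    rw [norm_smul (h s a) (pc θ s a • gg pc s a θ), Real.norm_eq_abs]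
    calc |h s a| * ‖pc θ s a • gg pc s a θ‖ ≤ 1 * (pc θ s a * G) :=
          mul_le_mul (hh s a) (norm_pc_smul_gg_le hpos hG s a θ) (norm_nonneg _) zero_le_one
      _ = pc θ s a * G := one_mul _
  refine le_trans (Finset.sum_le_sum fun a _ => hb a) ?_
  rw [← Finset.sum_mul, hnorm θ s, one_mul]

lemma norm_Hh_le {G M : ℝ} (hpos : ∀ θ s a, 0 < pc θ s a) (hnorm : ∀ θ s, ∑ a, pc θ s a = 1)
    (hC2 : ∀ s a, ContDiff ℝ 2 fun θ => Real.log (pc θ s a))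
    (hG : ∀ θ s a, ‖gradLog pc θ s a‖ ≤ G) (hM0 : 0 ≤ M)
    (hM : ∀ θ₁ θ₂ s a, ‖gradLog pc θ₁ s a - gradLog pc θ₂ s a‖ ≤ M * ‖θ₁ - θ₂‖)
    (hh : ∀ s a, |h s a| ≤ 1)
    (θ : EuclideanSpace ℝ (Fin d)) (s : S) : ‖Hh pc h θ s‖ ≤ M + G ^ 2 := by
  refine le_trans
    (norm_sum_le (E := EuclideanSpace ℝ (Fin d) →L[ℝ] (EuclideanSpace ℝ (Fin d) →L[ℝ] ℝ)) _ _) ?_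
  have hb : ∀ a, ‖h s a • D2pc pc s a θ‖ ≤ pc θ s a * (M + G ^ 2) := fun a => by
    rw [norm_smul (h s a) (D2pc pc s a θ), Real.norm_eq_abs]
    calc |h s a| * ‖D2pc pc s a θ‖ ≤ 1 * (pc θ s a * (M + G ^ 2)) :=
          mul_le_mul (hh s a) (norm_D2pc_le hpos hC2 hG hM0 hM s a θ)
            (norm_nonneg (D2pc pc s a θ)) zero_le_one
      _ = pc θ s a * (M + G ^ 2) := one_mul _
  refine le_trans (Finset.sum_le_sum fun a _ => hb a) ?_
  rw [← Finset.sum_mul, hnorm θ s, one_mul]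

end Stmt10Aux

end Part4

section Part5

variable {S A : Type*} [Fintype S] [DecidableEq S] [Fintype A] [Nonempty A] {d : ℕ}
variable {pc : EuclideanSpace ℝ (Fin d) → S → A → ℝ} {h : S → A → ℝ}

namespace Stmt10Aux

lemma keyJ (P : S → A → S → ℝ) (hP0 : ∀ s a s', 0 ≤ P s a s')
    (hP1 : ∀ s a, ∑ s', P s a s' = 1)
    (ρ : S → ℝ) (hρ0 : ∀ s, 0 ≤ ρ s) (hρ1 : ∑ s, ρ s = 1)
    (hpos : ∀ θ s a, 0 < pc θ s a) (hnorm : ∀ θ s, ∑ a, pc θ s a = 1)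
    (hC2 : ∀ s a, ContDiff ℝ 2 fun θ => Real.log (pc θ s a))
    {G : ℝ} (hG0 : 0 ≤ G) (hG : ∀ θ s a, ‖gradLog pc θ s a‖ ≤ G)
    {M : ℝ} (hM0 : 0 ≤ M)
    (hM : ∀ θ₁ θ₂ s a, ‖gradLog pc θ₁ s a - gradLog pc θ₂ s a‖ ≤ M * ‖θ₁ - θ₂‖)
    (hh : ∀ s a, |h s a| ≤ 1) :
    ∃ (dJ : ℕ → EuclideanSpace ℝ (Fin d) → (EuclideanSpace ℝ (Fin d) →L[ℝ] ℝ))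
      (HJ : ℕ → EuclideanSpace ℝ (Fin d) →
        (EuclideanSpace ℝ (Fin d) →L[ℝ] (EuclideanSpace ℝ (Fin d) →L[ℝ] ℝ))),
      ∀ (t : ℕ) (θ : EuclideanSpace ℝ (Fin d)), |Jt P ρ pc h t θ| ≤ 1 ∧
        HasFDerivAt (fun θ' => Jt P ρ pc h t θ') (dJ t θ) θ ∧
        HasFDerivAt (fun θ' => dJ t θ') (HJ t θ) θ ∧
        ‖dJ t θ‖ ≤ ((t : ℝ) + 1) * G ∧
        ‖HJ t θ‖ ≤ ((t : ℝ) + 1) * M + ((t : ℝ) + 1) ^ 2 * G ^ 2 := by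
  choose w Hw h0 h1 hw hHw hwn hHwn using fun t =>
    key P hP0 hP1 ρ hρ0 hρ1 hpos hnorm hC2 hG0 hG hM0 hM t
  refine ⟨fun t θ => ∑ s, (uu P ρ pc t θ s • dh pc h θ s + hpi pc h θ s • w t θ s),
    fun t θ => ∑ s, ((uu P ρ pc t θ s • Hh pc h θ s + (w t θ s).smulRight (dh pc h θ s)) +
      (hpi pc h θ s • Hw t θ s + (dh pc h θ s).smulRight (w t θ s))),
    fun t θ => ⟨?_, ?_, ?_, ?_, ?_⟩⟩
  · calc |Jt P ρ pc h t θ| ≤ ∑ s, |uu P ρ pc t θ s * hpi pc h θ s| :=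
          Finset.abs_sum_le_sum_abs _ _
      _ ≤ ∑ s, uu P ρ pc t θ s := Finset.sum_le_sum fun s _ => by
          rw [abs_mul, abs_of_nonneg (h0 t θ s)]
          exact mul_le_of_le_one_right (h0 t θ s) (abs_hpi_le hpos hnorm hh θ s)
      _ = 1 := h1 t θ
  · exact HasFDerivAt.fun_sum fun s _ => (hw t θ s).mul (hasFDerivAt_hpi hpos hC2 θ s)
  · exact HasFDerivAt.fun_sum fun s _ =>
      ((hw t θ s).smul (hasFDerivAt_dh hpos hC2 θ s)).add
        ((hasFDerivAt_hpi hpos hC2 θ s).smul (hHw t θ s))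
  · calc ‖∑ s, (uu P ρ pc t θ s • dh pc h θ s + hpi pc h θ s • w t θ s)‖
        ≤ ∑ s, (uu P ρ pc t θ s * G + ‖w t θ s‖) := by
          refine le_trans (norm_sum_le _ _) (Finset.sum_le_sum fun s _ => ?_)
          refine le_trans (norm_add_le _ _) (add_le_add ?_ ?_)
          · rw [norm_smul (uu P ρ pc t θ s) (dh pc h θ s), Real.norm_eq_abs,
              abs_of_nonneg (h0 t θ s)]
            exact mul_le_mul_of_nonneg_left (norm_dh_le hpos hnorm hG hh θ s) (h0 t θ s)
          · rw [norm_smul (hpi pc h θ s) (w t θ s), Real.norm_eq_abs]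
            exact mul_le_of_le_one_left (norm_nonneg _) (abs_hpi_le hpos hnorm hh θ s)
      _ = (∑ s, uu P ρ pc t θ s) * G + ∑ s, ‖w t θ s‖ := by
          rw [Finset.sum_add_distrib, ← Finset.sum_mul]
      _ ≤ 1 * G + t * G := by rw [h1 t θ]; exact add_le_add_right (hwn t θ) _
      _ = ((t : ℝ) + 1) * G := by ring
  · calc ‖∑ s, ((uu P ρ pc t θ s • Hh pc h θ s + (w t θ s).smulRight (dh pc h θ s)) +
          (hpi pc h θ s • Hw t θ s + (dh pc h θ s).smulRight (w t θ s)))‖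
        ≤ ∑ s, ((uu P ρ pc t θ s * (M + G ^ 2) + ‖w t θ s‖ * G) +
            (‖Hw t θ s‖ + G * ‖w t θ s‖)) := by
          refine le_trans
            (norm_sum_le (E := EuclideanSpace ℝ (Fin d) →L[ℝ] (EuclideanSpace ℝ (Fin d) →L[ℝ] ℝ))
              Finset.univ _) (Finset.sum_le_sum fun s _ => ?_)
          refine le_trans
            (norm_add_le (E := EuclideanSpace ℝ (Fin d) →L[ℝ] (EuclideanSpace ℝ (Fin d) →L[ℝ] ℝ)) _ _)
            (add_le_add ?_ ?_)
          · refine le_trans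
              (norm_add_le (E := EuclideanSpace ℝ (Fin d) →L[ℝ] (EuclideanSpace ℝ (Fin d) →L[ℝ] ℝ)) _ _)
              (add_le_add ?_ ?_)
            · rw [norm_smul (uu P ρ pc t θ s) (Hh pc h θ s), Real.norm_eq_abs,
                abs_of_nonneg (h0 t θ s)]
              exact mul_le_mul_of_nonneg_left
                (norm_Hh_le hpos hnorm hC2 hG hM0 hM hh θ s) (h0 t θ s)
            · rw [ContinuousLinearMap.norm_smulRight_apply]
              exact mul_le_mul_of_nonneg_left (norm_dh_le hpos hnorm hG hh θ s) (norm_nonneg _)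
          · refine le_trans
              (norm_add_le (E := EuclideanSpace ℝ (Fin d) →L[ℝ] (EuclideanSpace ℝ (Fin d) →L[ℝ] ℝ)) _ _)
              (add_le_add ?_ ?_)
            · rw [norm_smul (hpi pc h θ s) (Hw t θ s), Real.norm_eq_abs]
              exact mul_le_of_le_one_left (norm_nonneg (Hw t θ s))
                (abs_hpi_le hpos hnorm hh θ s)
            · rw [ContinuousLinearMap.norm_smulRight_apply]
              exact mul_le_mul_of_nonneg_right (norm_dh_le hpos hnorm hG hh θ s) (norm_nonneg _)
      _ = (∑ s, uu P ρ pc t θ s) * (M + G ^ 2) + (∑ s, ‖w t θ s‖) * G +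
            (∑ s, ‖Hw t θ s‖) + G * ∑ s, ‖w t θ s‖ := by
          simp only [Finset.sum_add_distrib, ← Finset.sum_mul, ← Finset.mul_sum]
          ring
      _ ≤ 1 * (M + G ^ 2) + (t * G) * G + (t * M + t ^ 2 * G ^ 2) + G * (t * G) := by
          rw [h1 t θ]
          have h2 := hwn t θ
          have h3 := hHwn t θ
          gcongr
      _ = ((t : ℝ) + 1) * M + ((t : ℝ) + 1) ^ 2 * G ^ 2 := by push_cast; ring

end Stmt10Aux

end Part5

section Part6

variable {S A : Type*} [Fintype S] [DecidableEq S] [Fintype A] {d : ℕ}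
variable {pc : EuclideanSpace ℝ (Fin d) → S → A → ℝ} {h : S → A → ℝ}

namespace Stmt10Aux

lemma pow_stoch (P : S → A → S → ℝ) (hP0 : ∀ s a s', 0 ≤ P s a s')
    (hP1 : ∀ s a, ∑ s', P s a s' = 1)
    (hpos : ∀ θ s a, 0 < pc θ s a) (hnorm : ∀ θ s, ∑ a, pc θ s a = 1)
    (θ : EuclideanSpace ℝ (Fin d)) :
    ∀ t : ℕ, (∀ s s', 0 ≤ (Pmat P (pc θ) ^ t) s s') ∧
      (∀ s, ∑ s', (Pmat P (pc θ) ^ t) s s' = 1) := by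
  intro t
  induction t with
  | zero =>
    constructor
    · intro s s'; rw [pow_zero]
      by_cases hss : s = s' <;> simp [Matrix.one_apply, hss]
    · intro s; rw [pow_zero]
      simp [Matrix.one_apply]
  | succ t ih =>
    obtain ⟨ih0, ih1⟩ := ih
    constructor
    · intro s s'
      rw [pow_succ, Matrix.mul_apply]
      refine Finset.sum_nonneg fun k _ => mul_nonneg (ih0 s k) ?_
      exact Pp_nonneg P hP0 hpos θ k s'
    · intro s
      rw [pow_succ]
      have : ∀ s', (Pmat P (pc θ) ^ t * Pmat P (pc θ)) s s'
          = ∑ k, (Pmat P (pc θ) ^ t) s k * Pmat P (pc θ) k s' :=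
        fun s' => Matrix.mul_apply
      simp only [this]
      rw [Finset.sum_comm]
      calc ∑ k, ∑ s', (Pmat P (pc θ) ^ t) s k * Pmat P (pc θ) k s'
          = ∑ k, (Pmat P (pc θ) ^ t) s k * ∑ s', Pmat P (pc θ) k s' :=
            Finset.sum_congr rfl fun k _ => (Finset.mul_sum _ _ _).symm
        _ = 1 := by
          have hrow : ∀ k, ∑ s', Pmat P (pc θ) k s' = 1 := fun k =>
            Pp_rowsum P hP1 hnorm θ k
          simp only [hrow, mul_one]
          exact ih1 s
lemma abs_mulVec_le (P : S → A → S → ℝ) (hP0 : ∀ s a s', 0 ≤ P s a s')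
    (hP1 : ∀ s a, ∑ s', P s a s' = 1)
    (hpos : ∀ θ s a, 0 < pc θ s a) (hnorm : ∀ θ s, ∑ a, pc θ s a = 1)
    (hh : ∀ s a, |h s a| ≤ 1)
    (θ : EuclideanSpace ℝ (Fin d)) (t : ℕ) (s : S) :
    |(Pmat P (pc θ) ^ t).mulVec (fun s' => hpi pc h θ s') s| ≤ 1 := by
  obtain ⟨h0, h1⟩ := pow_stoch P hP0 hP1 hpos hnorm θ t
  have : (Pmat P (pc θ) ^ t).mulVec (fun s' => hpi pc h θ s') s
      = ∑ s', (Pmat P (pc θ) ^ t) s s' * hpi pc h θ s' := rfl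
  rw [this]
  calc |∑ s', (Pmat P (pc θ) ^ t) s s' * hpi pc h θ s'|
      ≤ ∑ s', |(Pmat P (pc θ) ^ t) s s' * hpi pc h θ s'| := Finset.abs_sum_le_sum_abs _ _
    _ ≤ ∑ s', (Pmat P (pc θ) ^ t) s s' := Finset.sum_le_sum fun s' _ => by
        rw [abs_mul, abs_of_nonneg (h0 s s')]
        exact mul_le_of_le_one_right (h0 s s') (abs_hpi_le hpos hnorm hh θ s')
    _ = 1 := h1 s

lemma Jt_eq (P : S → A → S → ℝ) (ρ : S → ℝ) (t : ℕ) (θ : EuclideanSpace ℝ (Fin d)) :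
    Jt P ρ pc h t θ = ∑ s, ρ s * (Pmat P (pc θ) ^ t).mulVec (fun s' => hpi pc h θ s') s := by
  have hd := Matrix.dotProduct_mulVec ρ (Pmat P (pc θ) ^ t) (fun s' => hpi pc h θ s')
  have h1 : ρ ⬝ᵥ (Pmat P (pc θ) ^ t).mulVec (fun s' => hpi pc h θ s')
      = ∑ s, ρ s * (Pmat P (pc θ) ^ t).mulVec (fun s' => hpi pc h θ s') s := rfl
  have h2 : Matrix.vecMul ρ (Pmat P (pc θ) ^ t) ⬝ᵥ (fun s' => hpi pc h θ s')
      = Jt P ρ pc h t θ := rfl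
  rw [← h1, hd, h2]

/-- the value function as a series -/
lemma Jval_eq (P : S → A → S → ℝ) (hP0 : ∀ s a s', 0 ≤ P s a s')
    (hP1 : ∀ s a, ∑ s', P s a s' = 1)
    {γ : ℝ} (hγ0 : 0 < γ) (hγ1 : γ < 1) (ρ : S → ℝ)
    (hpos : ∀ θ s a, 0 < pc θ s a) (hnorm : ∀ θ s, ∑ a, pc θ s a = 1)
    (hh : ∀ s a, |h s a| ≤ 1) (θ : EuclideanSpace ℝ (Fin d)) :
    (∑ s, ρ s * (∑' t : ℕ, γ ^ t • (Pmat P (pc θ) ^ t).mulVec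
        (fun s' => ∑ a, pc θ s' a * h s' a)) s)
      = ∑' t : ℕ, γ ^ t * Jt P ρ pc h t θ := by
  set F : ℕ → S → ℝ := fun t => γ ^ t • (Pmat P (pc θ) ^ t).mulVec
    (fun s' => ∑ a, pc θ s' a * h s' a) with hF
  have hFb : ∀ t s, |F t s| ≤ γ ^ t := by
    intro t s
    have : F t s = γ ^ t * (Pmat P (pc θ) ^ t).mulVec (fun s' => hpi pc h θ s') s := rfl
    rw [this, abs_mul, abs_of_pos (pow_pos hγ0 t)]
    exact mul_le_of_le_one_right (pow_pos hγ0 t).le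
      (abs_mulVec_le P hP0 hP1 hpos hnorm hh θ t s)
  have hgeo : Summable fun t : ℕ => γ ^ t := summable_geometric_of_lt_one hγ0.le hγ1
  have hFs : ∀ s, Summable fun t => F t s := fun s =>
    Summable.of_norm_bounded hgeo fun t => by
      rw [Real.norm_eq_abs]; exact hFb t s
  have hFsum : Summable F := by
    rw [Pi.summable]; exact hFs
  have happ : ∀ s, (∑' t, F t) s = ∑' t, F t s := fun s => tsum_apply hFsum
  calc ∑ s, ρ s * (∑' t, F t) s = ∑ s, ∑' t, ρ s * F t s := by
        refine Finset.sum_congr rfl fun s _ => ?_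
        rw [happ s, tsum_mul_left]
    _ = ∑' t, ∑ s, ρ s * F t s := by
        refine (Summable.tsum_finsetSum fun s _ => ?_).symm
        exact (hFs s).mul_left (ρ s)
    _ = ∑' t, γ ^ t * Jt P ρ pc h t θ := by
        refine tsum_congr fun t => ?_
        rw [Jt_eq P ρ t θ, Finset.mul_sum]
        refine Finset.sum_congr rfl fun s _ => ?_
        have : F t s = γ ^ t * (Pmat P (pc θ) ^ t).mulVec (fun s' => hpi pc h θ s') s := rfl
        rw [this]; ring

end Stmt10Aux

end Part6

namespace Stmt10Aux

lemma geom_bound {γ : ℝ} (hγ0 : 0 < γ) (hγ1 : γ < 1) (G M : ℝ) (hG0 : 0 ≤ G) (hM0 : 0 ≤ M) :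
    (Summable fun t : ℕ => γ ^ t * (((t:ℝ)+1)*M + ((t:ℝ)+1)^2*G^2)) ∧
    ∑' t : ℕ, γ ^ t * (((t:ℝ)+1)*M + ((t:ℝ)+1)^2*G^2) ≤ M / (1-γ)^2 + 2*G^2/(1-γ)^3 := by
  have hnr : ‖γ‖ < 1 := by rw [Real.norm_eq_abs, abs_of_pos hγ0]; exact hγ1
  have hc : 0 < 1 - γ := by linarith
  have hgeo : Summable fun t : ℕ => γ ^ t := summable_geometric_of_lt_one hγ0.le hγ1
  have hs1 : Summable fun t : ℕ => (t:ℝ) * γ ^ t := by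
    simpa using summable_pow_mul_geometric_of_norm_lt_one 1 hnr
  have hs2 : Summable fun t : ℕ => (t:ℝ)^2 * γ ^ t := by
    simpa using summable_pow_mul_geometric_of_norm_lt_one 2 hnr
  have hS2s : Summable fun t : ℕ => ((t:ℝ)+1)^2 * γ ^ t :=
    (hs2.add ((hs1.mul_left 2).add hgeo)).congr fun t => by ring
  have hS1s : Summable fun t : ℕ => ((t:ℝ)+1) * γ ^ t :=
    (hs1.add hgeo).congr fun t => by ring
  have hv0 : ∑' t:ℕ, γ^t = (1-γ)⁻¹ := tsum_geometric_of_lt_one hγ0.le hγ1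
  have hv1 : ∑' t:ℕ, (t:ℝ)*γ^t = γ / (1-γ)^2 := by
    simpa using tsum_coe_mul_geometric_of_norm_lt_one hnr
  have hS1 : ∑' t:ℕ, ((t:ℝ)+1)*γ^t = γ/(1-γ)^2 + (1-γ)⁻¹ := by
    rw [← hv1, ← hv0, ← Summable.tsum_add hs1 hgeo]
    exact tsum_congr fun t => by ring
  have hshift : ∑' t:ℕ, (((t:ℝ)+1)^2 * γ^(t+1)) = ∑' t:ℕ, (t:ℝ)^2*γ^t := by
    rw [Summable.tsum_eq_zero_add hs2]
    push_cast
    norm_num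
  have hγS2 : γ * (∑' t:ℕ, ((t:ℝ)+1)^2*γ^t) = ∑' t:ℕ, (t:ℝ)^2*γ^t := by
    rw [← tsum_mul_left, ← hshift]
    exact tsum_congr fun t => by ring
  have hS2v : ∑' t:ℕ, ((t:ℝ)+1)^2*γ^t
      = (∑' t:ℕ, (t:ℝ)^2*γ^t) + (2*(γ/(1-γ)^2) + (1-γ)⁻¹) := by
    rw [← hv1, ← hv0]
    calc ∑' t:ℕ, ((t:ℝ)+1)^2*γ^t
        = ∑' t:ℕ, ((t:ℝ)^2*γ^t + (2*((t:ℝ)*γ^t) + γ^t)) := tsum_congr fun t => by ring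
      _ = (∑' t:ℕ, (t:ℝ)^2*γ^t) + ∑' t:ℕ, (2*((t:ℝ)*γ^t) + γ^t) :=
          Summable.tsum_add hs2 ((hs1.mul_left 2).add hgeo)
      _ = (∑' t:ℕ, (t:ℝ)^2*γ^t) + (2*(∑' t:ℕ, (t:ℝ)*γ^t) + ∑' t:ℕ, γ^t) := by
          rw [Summable.tsum_add (hs1.mul_left 2) hgeo, tsum_mul_left]
  have hS2 : ∑' t:ℕ, ((t:ℝ)+1)^2*γ^t ≤ 2/(1-γ)^3 := by
    set S2 := ∑' t:ℕ, ((t:ℝ)+1)^2*γ^t with hS2def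
    have heq : (1-γ) * S2 = 2*(γ/(1-γ)^2) + (1-γ)⁻¹ := by
      have := hS2v
      rw [← hγS2] at this
      linarith
    have key : 2*(γ/(1-γ)^2) + (1-γ)⁻¹ ≤ 2/(1-γ)^2 := by
      have e : 2*(γ/(1-γ)^2) + (1-γ)⁻¹ = (2*γ + (1-γ))/(1-γ)^2 := by
        field_simp
      rw [e]
      rw [div_le_div_iff_of_pos_right (pow_pos hc 2)]
      linarith
    have h3 : S2 ≤ (2/(1-γ)^2)/(1-γ) := by
      rw [le_div_iff₀ hc]
      calc S2 * (1-γ) = (1-γ) * S2 := by ring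
        _ ≤ 2/(1-γ)^2 := heq.le.trans key
    calc S2 ≤ (2/(1-γ)^2)/(1-γ) := h3
      _ = 2/(1-γ)^3 := by rw [div_div, ← pow_succ]
  have hsum : Summable (fun t : ℕ => γ^t * (((t:ℝ)+1)*M + ((t:ℝ)+1)^2*G^2)) :=
    ((hS1s.mul_left M).add (hS2s.mul_left (G^2))).congr fun t => by ring
  refine ⟨hsum, ?_⟩
  calc ∑' t:ℕ, γ^t * (((t:ℝ)+1)*M + ((t:ℝ)+1)^2*G^2)
      = M * (∑' t:ℕ, ((t:ℝ)+1)*γ^t) + G^2 * (∑' t:ℕ, ((t:ℝ)+1)^2*γ^t) := by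
        rw [← tsum_mul_left, ← tsum_mul_left, ← Summable.tsum_add (hS1s.mul_left M) (hS2s.mul_left (G^2))]
        exact tsum_congr fun t => by ring
    _ ≤ M * (1/(1-γ)^2) + G^2 * (2/(1-γ)^3) := by
        refine add_le_add ?_ (mul_le_mul_of_nonneg_left hS2 (by positivity))
        refine mul_le_mul_of_nonneg_left ?_ hM0
        rw [hS1]
        have e : γ/(1-γ)^2 + (1-γ)⁻¹ = 1/(1-γ)^2 := by
          field_simp
          ring
        rw [e]
    _ = M/(1-γ)^2 + 2*G^2/(1-γ)^3 := by ring

end Stmt10Aux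

section Part8

variable {S A : Type*} [Fintype S] [DecidableEq S] [Fintype A] [Nonempty A] {d : ℕ}
variable {pc : EuclideanSpace ℝ (Fin d) → S → A → ℝ} {h : S → A → ℝ}

namespace Stmt10Aux

lemma main (P : S → A → S → ℝ) (hP0 : ∀ s a s', 0 ≤ P s a s')
    (hP1 : ∀ s a, ∑ s', P s a s' = 1)
    {γ : ℝ} (hγ0 : 0 < γ) (hγ1 : γ < 1)
    (ρ : S → ℝ) (hρ0 : ∀ s, 0 ≤ ρ s) (hρ1 : ∑ s, ρ s = 1)
    (hpos : ∀ θ s a, 0 < pc θ s a) (hnorm : ∀ θ s, ∑ a, pc θ s a = 1)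
    (hC2 : ∀ s a, ContDiff ℝ 2 fun θ => Real.log (pc θ s a))
    {G : ℝ} (hG0 : 0 ≤ G) (hG : ∀ θ s a, ‖gradLog pc θ s a‖ ≤ G)
    {M : ℝ} (hM0 : 0 ≤ M)
    (hM : ∀ θ₁ θ₂ s a, ‖gradLog pc θ₁ s a - gradLog pc θ₂ s a‖ ≤ M * ‖θ₁ - θ₂‖)
    (hh : ∀ s a, |h s a| ≤ 1) :
    Differentiable ℝ (fun θ => ∑' t : ℕ, γ ^ t * Jt P ρ pc h t θ) ∧
    ∀ θ₁ θ₂, ‖gradient (fun θ' => ∑' t : ℕ, γ ^ t * Jt P ρ pc h t θ') θ₁ -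
        gradient (fun θ' => ∑' t : ℕ, γ ^ t * Jt P ρ pc h t θ') θ₂‖
      ≤ (M / (1 - γ) ^ 2 + 2 * G ^ 2 / (1 - γ) ^ 3) * ‖θ₁ - θ₂‖ := by
  obtain ⟨dJ, HJ, hkey⟩ := keyJ P hP0 hP1 ρ hρ0 hρ1 hpos hnorm hC2 hG0 hG hM0 hM hh
  have hnr : ‖γ‖ < 1 := by rw [Real.norm_eq_abs, abs_of_pos hγ0]; exact hγ1
  have hgeo : Summable fun t : ℕ => γ ^ t := summable_geometric_of_lt_one hγ0.le hγ1
  have hs1 : Summable fun t : ℕ => (t:ℝ) * γ ^ t := by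
    simpa using summable_pow_mul_geometric_of_norm_lt_one 1 hnr
  have hLsum : Summable (fun t : ℕ => γ ^ t * (((t:ℝ)+1) * G)) :=
    ((hs1.mul_left G).add (hgeo.mul_left G)).congr fun t => by ring
  have hbound : ∀ (t : ℕ) (x : EuclideanSpace ℝ (Fin d)),
      ‖γ ^ t • dJ t x‖ ≤ γ ^ t * (((t:ℝ)+1) * G) := by
    intro t x
    rw [norm_smul (γ ^ t) (dJ t x), Real.norm_eq_abs, abs_of_pos (pow_pos hγ0 t)]
    exact mul_le_mul_of_nonneg_left (hkey t x).2.2.2.1 (pow_pos hγ0 t).le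
  have hf0 : Summable fun t : ℕ => γ ^ t * Jt P ρ pc h t 0 := by
    refine Summable.of_norm_bounded hgeo fun t => ?_
    rw [Real.norm_eq_abs, abs_mul, abs_of_pos (pow_pos hγ0 t)]
    exact mul_le_of_le_one_right (pow_pos hγ0 t).le (hkey t 0).1
  have hasF : ∀ θ, HasFDerivAt (fun θ' => ∑' t : ℕ, γ ^ t * Jt P ρ pc h t θ')
      (∑' t : ℕ, γ ^ t • dJ t θ) θ := by
    intro θ
    exact hasFDerivAt_tsum hLsum (fun t x => ((hkey t x).2.1).const_mul (γ ^ t))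
      hbound hf0 θ
  refine ⟨fun θ => (hasF θ).differentiableAt, ?_⟩
  intro θ₁ θ₂
  have hK := geom_bound hγ0 hγ1 G M hG0 hM0
  have hsA : Summable fun t : ℕ => γ ^ t • dJ t θ₁ :=
    Summable.of_norm_bounded hLsum fun t => hbound t θ₁
  have hsB : Summable fun t : ℕ => γ ^ t • dJ t θ₂ :=
    Summable.of_norm_bounded hLsum fun t => hbound t θ₂
  have hlip : ∀ t : ℕ, ‖dJ t θ₁ - dJ t θ₂‖ ≤
      (((t:ℝ)+1) * M + ((t:ℝ)+1) ^ 2 * G ^ 2) * ‖θ₁ - θ₂‖ := by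
    intro t
    exact convex_univ.norm_image_sub_le_of_norm_hasFDerivWithin_le
      (fun x _ => ((hkey t x).2.2.1).hasFDerivWithinAt)
      (fun x _ => (hkey t x).2.2.2.2) (Set.mem_univ θ₂) (Set.mem_univ θ₁)
  have hterm : ∀ t : ℕ, ‖γ ^ t • dJ t θ₁ - γ ^ t • dJ t θ₂‖ ≤
      γ ^ t * (((t:ℝ)+1) * M + ((t:ℝ)+1) ^ 2 * G ^ 2) * ‖θ₁ - θ₂‖ := by
    intro t
    rw [show γ ^ t • dJ t θ₁ - γ ^ t • dJ t θ₂ = γ ^ t • (dJ t θ₁ - dJ t θ₂) from (smul_sub _ _ _).symm, norm_smul (γ ^ t) (dJ t θ₁ - dJ t θ₂), Real.norm_eq_abs,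
      abs_of_pos (pow_pos hγ0 t), mul_assoc]
    exact mul_le_mul_of_nonneg_left (hlip t) (pow_pos hγ0 t).le
  have hKsum' : Summable fun t : ℕ =>
      γ ^ t * (((t:ℝ)+1) * M + ((t:ℝ)+1) ^ 2 * G ^ 2) * ‖θ₁ - θ₂‖ :=
    hK.1.mul_right _
  have hnorms : Summable fun t : ℕ => ‖γ ^ t • dJ t θ₁ - γ ^ t • dJ t θ₂‖ :=
    Summable.of_nonneg_of_le (fun t => norm_nonneg _) hterm hKsum'
  have hgradeq : gradient (fun θ' => ∑' t : ℕ, γ ^ t * Jt P ρ pc h t θ') θ₁ -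
      gradient (fun θ' => ∑' t : ℕ, γ ^ t * Jt P ρ pc h t θ') θ₂
      = (InnerProductSpace.toDual ℝ (EuclideanSpace ℝ (Fin d))).symm
        (fderiv ℝ (fun θ' => ∑' t : ℕ, γ ^ t * Jt P ρ pc h t θ') θ₁ -
         fderiv ℝ (fun θ' => ∑' t : ℕ, γ ^ t * Jt P ρ pc h t θ') θ₂) := by
    rw [map_sub]; rfl
  rw [hgradeq, LinearIsometryEquiv.norm_map, (hasF θ₁).fderiv, (hasF θ₂).fderiv]
  calc ‖(∑' t : ℕ, γ ^ t • dJ t θ₁) - ∑' t : ℕ, γ ^ t • dJ t θ₂‖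
      = ‖∑' t : ℕ, (γ ^ t • dJ t θ₁ - γ ^ t • dJ t θ₂)‖ := by
        rw [Summable.tsum_sub hsA hsB]
    _ ≤ ∑' t : ℕ, ‖γ ^ t • dJ t θ₁ - γ ^ t • dJ t θ₂‖ := norm_tsum_le_tsum_norm hnorms
    _ ≤ ∑' t : ℕ, γ ^ t * (((t:ℝ)+1) * M + ((t:ℝ)+1) ^ 2 * G ^ 2) * ‖θ₁ - θ₂‖ :=
        Summable.tsum_le_tsum hterm hnorms hKsum'
    _ = (∑' t : ℕ, γ ^ t * (((t:ℝ)+1) * M + ((t:ℝ)+1) ^ 2 * G ^ 2)) * ‖θ₁ - θ₂‖ :=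
        tsum_mul_right
    _ ≤ (M / (1 - γ) ^ 2 + 2 * G ^ 2 / (1 - γ) ^ 3) * ‖θ₁ - θ₂‖ :=
        mul_le_mul_of_nonneg_right hK.2 (norm_nonneg _)

end Stmt10Aux

end Part8


/-- Lemma 1 of the paper. Under twice continuous differentiability of the
log-policy, the score bound `G` and score smoothness `M`, the value `θ ↦ J_h(π_θ)` for
`|h| ≤ 1` is differentiable with `L_J`-Lipschitz gradient, where
`L_J = M/(1-γ)² + 2G²/(1-γ)³`. -/
theorem stmt10 {S A : Type*} [Fintype S] [DecidableEq S] [Fintype A] [Nonempty S] [Nonempty A]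
    {d : ℕ}
    (P : S → A → S → ℝ) (hP0 : ∀ s a s', 0 ≤ P s a s') (hP1 : ∀ s a, ∑ s', P s a s' = 1)
    (γ : ℝ) (hγ0 : 0 < γ) (hγ1 : γ < 1)
    (ρ : S → ℝ) (hρ0 : ∀ s, 0 ≤ ρ s) (hρ1 : ∑ s, ρ s = 1)
    (pc : EuclideanSpace ℝ (Fin d) → S → A → ℝ)
    (hpos : ∀ θ s a, 0 < pc θ s a) (hnorm : ∀ θ s, ∑ a, pc θ s a = 1)
    (hC2 : ∀ s a, ContDiff ℝ 2 fun θ => Real.log (pc θ s a))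
    (G : ℝ) (hG : ∀ θ s a, ‖gradLog pc θ s a‖ ≤ G)
    (M : ℝ) (hM : ∀ θ₁ θ₂ s a, ‖gradLog pc θ₁ s a - gradLog pc θ₂ s a‖ ≤ M * ‖θ₁ - θ₂‖)
    (h : S → A → ℝ) (hh : ∀ s a, |h s a| ≤ 1) :
    Differentiable ℝ (fun θ => Jval P γ ρ h (pc θ)) ∧
    ∀ θ₁ θ₂, ‖gradient (fun θ' => Jval P γ ρ h (pc θ')) θ₁ -
        gradient (fun θ' => Jval P γ ρ h (pc θ')) θ₂‖
      ≤ (M / (1 - γ) ^ 2 + 2 * G ^ 2 / (1 - γ) ^ 3) * ‖θ₁ - θ₂‖ := by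
  classical
  rcases Nat.eq_zero_or_pos d with hd | hd
  · -- degenerate case : the parameter space is trivial
    subst hd
    have hsub : ∀ a b : EuclideanSpace ℝ (Fin 0), a = b := fun a b =>
      PiLp.ext fun i => i.elim0
    have hconst : (fun θ => Jval P γ ρ h (pc θ)) = fun _ => Jval P γ ρ h (pc 0) :=
      funext fun θ => by rw [hsub θ 0]
    constructor
    · rw [hconst]; exact differentiable_const _
    · intro θ₁ θ₂
      rw [hsub θ₁ θ₂, sub_self, sub_self, norm_zero]
      simp
  · -- main case
    have hG0 : 0 ≤ G :=
      le_trans (norm_nonneg _) (hG 0 (Classical.arbitrary S) (Classical.arbitrary A))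
    have hM0 : 0 ≤ M := by
      have hne : Nonempty (Fin d) := ⟨⟨0, hd⟩⟩
      set θa : EuclideanSpace ℝ (Fin d) := EuclideanSpace.single ⟨0, hd⟩ (1:ℝ) with hθa
      have hθane : θa ≠ 0 := by
        intro hcon
        have := congrArg (fun v : EuclideanSpace ℝ (Fin d) => v ⟨0, hd⟩) hcon
        rw [hθa] at this
        simp [EuclideanSpace.single_apply] at this
      have hpos' : 0 < ‖θa - 0‖ := by
        rw [sub_zero]; exact norm_pos_iff.mpr hθane
      have h1 : 0 ≤ M * ‖θa - 0‖ :=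
        le_trans (norm_nonneg _)
          (hM θa 0 (Classical.arbitrary S) (Classical.arbitrary A))
      by_contra hcon
      push_neg at hcon
      nlinarith
    have hfun : (fun θ => Jval P γ ρ h (pc θ))
        = fun θ => ∑' t : ℕ, γ ^ t * Stmt10Aux.Jt P ρ pc h t θ := by
      funext θ
      exact Stmt10Aux.Jval_eq P hP0 hP1 hγ0 hγ1 ρ hpos hnorm hh θ
    rw [hfun]
    exact Stmt10Aux.main P hP0 hP1 hγ0 hγ1 ρ hρ0 hρ1 hpos hnorm hC2 hG0 hG hM0 hM hh
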